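/- Let (Ω, 𝓕, π) be a σ-finite measure space and let ν₀, ν₁ be probability measures on (Ω, 𝓕) with densities f₀ = dν₀/dπ, f₁ = dν₁/dπ, such that ν₁ ≪ ν₀. For β ≥ 0 set C_β := ∫ f₀^{1/(1+β)} f₁^{β/(1+β)} dπ and let μ*_β be the probability measure with dμ*_β/dπ = C_β⁻¹ f₀^{1/(1+β)} f₁^{β/(1+β)}. Then D_KL(μ*_β, ν₀) converges to D_KL(ν₁, ν₀) as β → ∞. -/

import Mathlib

open MeasureTheory
open scoped Classical ENNReal

/-- Kullback–Leibler divergence: `D_KL(μ, ν) = ∫ log(dμ/dν) dμ` if `μ ≪ ν` (and the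
log-likelihood ratio is integrable), and `∞` otherwise. Valued in `EReal = (-∞, ∞]`. -/
noncomputable def klDiv {Ω : Type*} [MeasurableSpace Ω] (μ ν : Measure Ω) : EReal :=
  if μ ≪ ν ∧ Integrable (llr μ ν) μ then ((∫ x, llr μ ν x ∂μ : ℝ) : EReal) else ⊤

/-- The normalizing constant `C_β = ∫ f₀^{1/(1+β)} f₁^{β/(1+β)} dπ` of the geometric mixture. -/
noncomputable def geomConst {Ω : Type*} [MeasurableSpace Ω] (π : Measure Ω)
    (f₀ f₁ : Ω → ℝ≥0∞) (β : ℝ) : ℝ≥0∞ :=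
  ∫⁻ x, f₀ x ^ (1 / (1 + β)) * f₁ x ^ (β / (1 + β)) ∂π

/-- The geometric-mixture measure `μ*_β` with `dμ*_β/dπ = C_β⁻¹ f₀^{1/(1+β)} f₁^{β/(1+β)}`. -/
noncomputable def geomMix {Ω : Type*} [MeasurableSpace Ω] (π : Measure Ω)
    (f₀ f₁ : Ω → ℝ≥0∞) (β : ℝ) : Measure Ω :=
  π.withDensity fun x => (geomConst π f₀ f₁ β)⁻¹ * (f₀ x ^ (1 / (1 + β)) * f₁ x ^ (β / (1 + β)))

open Filter
open scoped NNReal Topology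



lemma aux_rpow_le {y t : ℝ} (hy : 0 ≤ y) (ht0 : 0 ≤ t) (ht1 : t ≤ 1) :
    y ^ t ≤ 1 + y := by
  rcases le_or_gt y 1 with h | h
  · calc y ^ t ≤ 1 := Real.rpow_le_one hy h ht0
    _ ≤ 1 + y := by linarith
  · calc y ^ t ≤ y ^ (1:ℝ) := Real.rpow_le_rpow_of_exponent_le h.le ht1
    _ = y := Real.rpow_one y
    _ ≤ 1 + y := by linarith

lemma aux_neglog {y t : ℝ} (hy : 0 ≤ y) (ht : 1/2 ≤ t) :
    y ^ t * max (-Real.log y) 0 ≤ 2 := by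
  rcases eq_or_lt_of_le hy with h0 | h0
  · rw [← h0, Real.zero_rpow (by norm_num; linarith : t ≠ 0)]
    norm_num
  rcases le_or_gt 1 y with h1 | h1
  · have hl : -Real.log y ≤ 0 := by simpa using Real.log_nonneg h1
    rw [max_eq_right hl, mul_zero]
    norm_num
  · have hlog : 0 ≤ -Real.log y := by
      have := Real.log_nonpos hy h1.le
      linarith
    rw [max_eq_left hlog]
    have h4 : 0 < y ^ (1/2:ℝ) := Real.rpow_pos_of_pos h0 _
    have h2 : y ^ t ≤ y ^ (1/2 : ℝ) := Real.rpow_le_rpow_of_exponent_ge h0 h1.le ht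
    have h5 : -Real.log y ≤ 2 * (y ^ (1/2:ℝ))⁻¹ := by
      have h3 : -Real.log y = 2 * -Real.log (y ^ (1/2:ℝ)) := by
        rw [Real.log_rpow h0]; ring
      have h6 : -Real.log (y ^ (1/2:ℝ)) ≤ (y ^ (1/2:ℝ))⁻¹ := by
        rw [← Real.log_inv]
        have := Real.log_le_sub_one_of_pos (show 0 < (y ^ (1/2:ℝ))⁻¹ by positivity)
        linarith
      linarith
    calc y ^ t * -Real.log y ≤ y ^ (1/2:ℝ) * (2 * (y ^ (1/2:ℝ))⁻¹) :=
          mul_le_mul h2 h5 hlog h4.le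
      _ = 2 := by field_simp

lemma aux_poslog {y t : ℝ} (hy : 0 ≤ y) (ht0 : 0 ≤ t) (ht1 : t < 1) :
    y ^ t * max (Real.log y) 0 ≤ y / (1 - t) := by
  rcases le_or_gt y 1 with h1 | h1
  · rw [max_eq_right (Real.log_nonpos hy h1), mul_zero]
    have : 0 < 1 - t := by linarith
    positivity
  · have hy0 : 0 < y := lt_trans one_pos h1
    have hl : 0 ≤ Real.log y := Real.log_nonneg h1.le
    rw [max_eq_left hl]
    have h1t : (0:ℝ) < 1 - t := by linarith
    have key : Real.log y ≤ y ^ (1 - t) / (1 - t) := by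
      have h7 := Real.log_le_sub_one_of_pos (Real.rpow_pos_of_pos hy0 (1-t))
      rw [Real.log_rpow hy0] at h7
      rw [div_eq_inv_mul, ← mul_le_mul_iff_of_pos_left h1t, ← mul_assoc, mul_inv_cancel₀ h1t.ne', one_mul]
      nlinarith [Real.rpow_pos_of_pos hy0 (1-t)]
    have hyt : 0 ≤ y ^ t := Real.rpow_nonneg hy t
    calc y ^ t * Real.log y ≤ y ^ t * (y ^ (1-t) / (1-t)) :=
          mul_le_mul_of_nonneg_left key hyt
      _ = y / (1-t) := by
          rw [mul_div_assoc', ← Real.rpow_add hy0]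
          norm_num

lemma aux_abs_log (y : ℝ) : |Real.log y| = max (Real.log y) 0 + max (-Real.log y) 0 := by
  rcases le_or_gt 0 (Real.log y) with h | h
  · rw [abs_of_nonneg h, max_eq_left h, max_eq_right (by linarith)]; ring
  · rw [abs_of_neg h, max_eq_right h.le, max_eq_left (by linarith)]; ring

lemma aux_bound {y t : ℝ} (hy : 0 ≤ y) (ht : 1/2 ≤ t) (ht1 : t < 1) :
    |y ^ t * Real.log y| ≤ 2 + y / (1 - t) := by
  have h1 := aux_neglog hy ht
  have h2 := aux_poslog hy (by linarith) ht1
  have hyt : 0 ≤ y ^ t := Real.rpow_nonneg hy t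
  rw [abs_mul, abs_of_nonneg hyt, aux_abs_log, mul_add]
  linarith

lemma aux_bound2 {y t : ℝ} (hy : 0 ≤ y) (ht : 1/2 ≤ t) (ht1 : t ≤ 1) :
    |y ^ t * Real.log y| ≤ 2 + |y * Real.log y| := by
  have h1 := aux_neglog hy ht
  have hyt : 0 ≤ y ^ t := Real.rpow_nonneg hy t
  have hpos : y ^ t * max (Real.log y) 0 ≤ |y * Real.log y| := by
    rcases le_or_gt y 1 with h | h
    · rw [max_eq_right (Real.log_nonpos hy h), mul_zero]
      exact abs_nonneg _
    · have hl : 0 ≤ Real.log y := Real.log_nonneg h.le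
      rw [max_eq_left hl, abs_mul, abs_of_nonneg hy, abs_of_nonneg hl]
      refine mul_le_mul_of_nonneg_right ?_ hl
      calc y ^ t ≤ y ^ (1:ℝ) := Real.rpow_le_rpow_of_exponent_le h.le ht1
        _ = y := Real.rpow_one y
  rw [abs_mul, abs_of_nonneg hyt, aux_abs_log, mul_add]
  linarith

lemma aux_neglog1 {y : ℝ} (hy : 0 ≤ y) : y * max (-Real.log y) 0 ≤ 1 := by
  rcases eq_or_lt_of_le hy with h0 | h0
  · rw [← h0, zero_mul]; norm_num
  rcases le_or_gt 1 y with h1 | h1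
  · rw [max_eq_right (by simpa using Real.log_nonneg h1), mul_zero]; norm_num
  · have hlog : 0 ≤ -Real.log y := by
      have := Real.log_nonpos hy h1.le
      linarith
    rw [max_eq_left hlog]
    have h5 : -Real.log y ≤ y⁻¹ - 1 := by
      rw [← Real.log_inv]
      exact Real.log_le_sub_one_of_pos (by positivity)
    calc y * -Real.log y ≤ y * (y⁻¹ - 1) := mul_le_mul_of_nonneg_left h5 h0.le
      _ = 1 - y := by field_simp
      _ ≤ 1 := by linarith

lemma aux_log_split (y : ℝ) : Real.log y = max (Real.log y) 0 - max (-Real.log y) 0 := by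
  rcases le_or_gt 0 (Real.log y) with h | h
  · rw [max_eq_left h, max_eq_right (by linarith)]; ring
  · rw [max_eq_right h.le, max_eq_left (by linarith)]; ring

section core

variable {Ω : Type*} [MeasurableSpace Ω] {ν₀ : Measure Ω} [IsProbabilityMeasure ν₀]
  {r : Ω → ℝ≥0∞}

lemma integrable_rho (hr : Measurable r) (hmass : ∫⁻ x, r x ∂ν₀ = 1) :
    Integrable (fun x => (r x).toReal) ν₀ :=
  integrable_toReal_of_lintegral_ne_top hr.aemeasurable (by simp [hmass])

lemma integral_rho (hr : Measurable r) (hfin : ∀ᵐ x ∂ν₀, r x < ⊤)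
    (hmass : ∫⁻ x, r x ∂ν₀ = 1) :
    ∫ x, (r x).toReal ∂ν₀ = 1 := by
  rw [integral_toReal hr.aemeasurable hfin, hmass]
  simp

lemma C_ne_top (hmass : ∫⁻ x, r x ∂ν₀ = 1) {t : ℝ} (ht0 : 0 ≤ t) (ht1 : t ≤ 1) :
    ∫⁻ x, r x ^ t ∂ν₀ ≠ ⊤ := by
  have hb : ∀ x, r x ^ t ≤ 1 + r x := fun x => by
    rcases le_or_gt (r x) 1 with h | h
    · exact le_trans (ENNReal.rpow_le_one h ht0) le_self_add
    · calc r x ^ t ≤ r x ^ (1:ℝ) := ENNReal.rpow_le_rpow_of_exponent_le h.le ht1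
        _ = r x := ENNReal.rpow_one _
        _ ≤ 1 + r x := le_add_self
  have hle : ∫⁻ x, r x ^ t ∂ν₀ ≤ ∫⁻ x, (1 + r x) ∂ν₀ := lintegral_mono hb
  rw [lintegral_add_left measurable_const, lintegral_one, hmass, measure_univ] at hle
  exact ne_top_of_le_ne_top (by norm_num) hle

lemma C_ne_zero (hr : Measurable r) (hmass : ∫⁻ x, r x ∂ν₀ = 1) {t : ℝ} (ht0 : 0 < t) :
    ∫⁻ x, r x ^ t ∂ν₀ ≠ 0 := by
  intro h
  rw [lintegral_eq_zero_iff (hr.pow_const t)] at h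
  have hr0 : r =ᵐ[ν₀] 0 := by
    filter_upwards [h] with x hx
    simp only [Pi.zero_apply] at hx ⊢
    rcases (ENNReal.rpow_eq_zero_iff).1 hx with ⟨h1, _⟩ | ⟨_, h2⟩
    · exact h1
    · linarith
  rw [lintegral_congr_ae hr0] at hmass
  simp at hmass

lemma integral_rpow_eq (hr : Measurable r) (hfin : ∀ᵐ x ∂ν₀, r x < ⊤) {t : ℝ} (ht0 : 0 ≤ t) :
    ∫ x, (r x).toReal ^ t ∂ν₀ = (∫⁻ x, r x ^ t ∂ν₀).toReal := by
  rw [← integral_toReal (hr.pow_const t).aemeasurable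
      (by filter_upwards [hfin] with x hx; exact ENNReal.rpow_lt_top_of_nonneg ht0 hx.ne)]
  exact integral_congr_ae (Filter.Eventually.of_forall fun x => ENNReal.toReal_rpow _ _)

lemma integrable_rpow (hr : Measurable r) (hmass : ∫⁻ x, r x ∂ν₀ = 1)
    {t : ℝ} (ht0 : 0 ≤ t) (ht1 : t ≤ 1) :
    Integrable (fun x => (r x).toReal ^ t) ν₀ := by
  refine Integrable.mono' ((integrable_const (1:ℝ)).add (integrable_rho hr hmass))
    ((hr.ennreal_toReal.pow_const t)).aestronglyMeasurable ?_
  filter_upwards with x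
  rw [Real.norm_eq_abs, abs_of_nonneg (Real.rpow_nonneg ENNReal.toReal_nonneg t)]
  exact aux_rpow_le ENNReal.toReal_nonneg ht0 ht1

lemma integrable_rpow_log (hr : Measurable r) (hmass : ∫⁻ x, r x ∂ν₀ = 1)
    {t : ℝ} (ht : 1/2 ≤ t) (ht1 : t < 1) :
    Integrable (fun x => (r x).toReal ^ t * Real.log ((r x).toReal)) ν₀ := by
  have hb : Integrable (fun x => 2 + (r x).toReal / (1 - t)) ν₀ :=
    (integrable_const 2).add ((integrable_rho hr hmass).div_const _)
  refine Integrable.mono' hb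
    ((hr.ennreal_toReal.pow_const t).mul
      (Real.measurable_log.comp hr.ennreal_toReal)).aestronglyMeasurable ?_
  filter_upwards with x
  rw [Real.norm_eq_abs]
  exact aux_bound ENNReal.toReal_nonneg ht ht1

end core

section core2

variable {Ω : Type*} [MeasurableSpace Ω] {ν₀ : Measure Ω} [IsProbabilityMeasure ν₀]
  {r : Ω → ℝ≥0∞}

lemma llr_withDensity (h : Ω → ℝ≥0∞) (hh : Measurable h) :
    llr (ν₀.withDensity h) ν₀ =ᵐ[ν₀] fun x => Real.log ((h x).toReal) := by
  filter_upwards [Measure.rnDeriv_withDensity ν₀ hh] with x hx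
  rw [llr, hx]

lemma klDiv_withDensity_eq (h : Ω → ℝ≥0∞) (hh : Measurable h) (hfin : ∀ᵐ x ∂ν₀, h x < ⊤)
    (hint : Integrable (fun x => (h x).toReal * Real.log ((h x).toReal)) ν₀) :
    klDiv (ν₀.withDensity h) ν₀
      = ((∫ x, (h x).toReal * Real.log ((h x).toReal) ∂ν₀ : ℝ) : EReal) := by
  have hac : ν₀.withDensity h ≪ ν₀ := withDensity_absolutelyContinuous _ _
  have hllr' := hac.ae_eq (llr_withDensity h hh)
  have hint' : Integrable (llr (ν₀.withDensity h) ν₀) (ν₀.withDensity h) := by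
    rw [integrable_congr hllr', integrable_withDensity_iff hh hfin]
    simpa [mul_comm] using hint
  rw [klDiv, if_pos ⟨hac, hint'⟩]
  congr 1
  rw [integral_congr_ae hllr']
  have hd : ν₀.withDensity h = ν₀.withDensity (fun x => ((h x).toNNReal : ℝ≥0∞)) :=
    (withDensity_congr_ae (by
      filter_upwards [hfin] with x hx
      rw [ENNReal.coe_toNNReal hx.ne])).symm
  rw [hd, integral_withDensity_eq_integral_smul hh.ennreal_toNNReal]
  refine integral_congr_ae (Filter.Eventually.of_forall fun x => ?_)
  simp [NNReal.smul_def, ENNReal.toReal, mul_comm]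

lemma mul_log_formula {c y t : ℝ} (hc : 0 < c) (ht : 0 < t) (hy : 0 ≤ y) :
    (c⁻¹ * y ^ t) * Real.log (c⁻¹ * y ^ t)
      = c⁻¹ * Real.log c⁻¹ * y ^ t + c⁻¹ * t * (y ^ t * Real.log y) := by
  rcases eq_or_lt_of_le hy with h0 | h0
  · rw [← h0, Real.zero_rpow ht.ne']
    simp
  · have hyt : 0 < y ^ t := Real.rpow_pos_of_pos h0 t
    rw [Real.log_mul (by positivity) hyt.ne', Real.log_rpow h0]
    ring

lemma klDiv_geom_eq (hr : Measurable r) (hfin : ∀ᵐ x ∂ν₀, r x < ⊤)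
    (hmass : ∫⁻ x, r x ∂ν₀ = 1) {t : ℝ} (ht : 1/2 ≤ t) (ht1 : t < 1) :
    klDiv (ν₀.withDensity fun x => (∫⁻ y, r y ^ t ∂ν₀)⁻¹ * r x ^ t) ν₀
      = ((- Real.log (∫ x, (r x).toReal ^ t ∂ν₀)
          + t * (∫ x, (r x).toReal ^ t ∂ν₀)⁻¹
            * ∫ x, (r x).toReal ^ t * Real.log ((r x).toReal) ∂ν₀ : ℝ) : EReal) := by
  have ht0 : (0:ℝ) < t := by linarith
  set C := ∫⁻ y, r y ^ t ∂ν₀ with hCdef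
  have hC0 : C ≠ 0 := C_ne_zero hr hmass ht0
  have hCt : C ≠ ⊤ := C_ne_top hmass ht0.le ht1.le
  set J := ∫ x, (r x).toReal ^ t ∂ν₀ with hJdef
  have hJC : J = C.toReal := integral_rpow_eq hr hfin ht0.le
  have hJ0 : 0 < J := by rw [hJC]; exact ENNReal.toReal_pos hC0 hCt
  have hh : Measurable (fun x => C⁻¹ * r x ^ t) := (hr.pow_const t).const_mul _
  have hfin' : ∀ᵐ x ∂ν₀, C⁻¹ * r x ^ t < ⊤ := by
    filter_upwards [hfin] with x hx
    exact ENNReal.mul_lt_top (by simpa using ENNReal.inv_lt_top.2 (pos_iff_ne_zero.2 hC0))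
      (ENNReal.rpow_lt_top_of_nonneg ht0.le hx.ne)
  have htr : ∀ᵐ x ∂ν₀, ((C⁻¹ * r x ^ t)).toReal = J⁻¹ * (r x).toReal ^ t := by
    filter_upwards [hfin] with x hx
    rw [ENNReal.toReal_mul, ENNReal.toReal_inv, ENNReal.toReal_rpow, hJC]
  have hintg : (fun x => ((C⁻¹ * r x ^ t)).toReal * Real.log (((C⁻¹ * r x ^ t)).toReal))
      =ᵐ[ν₀] fun x => J⁻¹ * Real.log J⁻¹ * (r x).toReal ^ t
        + J⁻¹ * t * ((r x).toReal ^ t * Real.log ((r x).toReal)) := by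
    filter_upwards [htr] with x hx
    rw [hx]
    exact mul_log_formula hJ0 ht0 ENNReal.toReal_nonneg
  have hi1 : Integrable (fun x => J⁻¹ * Real.log J⁻¹ * (r x).toReal ^ t) ν₀ :=
    (integrable_rpow hr hmass ht0.le ht1.le).const_mul _
  have hi2 : Integrable
      (fun x => J⁻¹ * t * ((r x).toReal ^ t * Real.log ((r x).toReal))) ν₀ :=
    (integrable_rpow_log hr hmass ht ht1).const_mul _
  have hint : Integrable (fun x => ((C⁻¹ * r x ^ t)).toReal
      * Real.log (((C⁻¹ * r x ^ t)).toReal)) ν₀ := by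
    rw [integrable_congr hintg]
    exact hi1.add hi2
  rw [klDiv_withDensity_eq _ hh hfin' hint]
  congr 1
  rw [integral_congr_ae hintg, integral_add hi1 hi2, integral_const_mul, integral_const_mul,
    ← hJdef, Real.log_inv]
  field_simp

lemma klDiv_one_top (hr : Measurable r) (hfin : ∀ᵐ x ∂ν₀, r x < ⊤)
    (hint : ¬ Integrable (fun x => (r x).toReal * Real.log ((r x).toReal)) ν₀) :
    klDiv (ν₀.withDensity r) ν₀ = ⊤ := by
  rw [klDiv, if_neg]
  rintro ⟨hac, hi⟩
  apply hint
  rw [integrable_congr (hac.ae_eq (llr_withDensity r hr)),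
    integrable_withDensity_iff hr hfin] at hi
  simpa [mul_comm] using hi

end core2

section conv

variable {Ω : Type*} [MeasurableSpace Ω] {ν₀ : Measure Ω} [IsProbabilityMeasure ν₀]
  {r : Ω → ℝ≥0∞} {s : ℝ → ℝ}

lemma tendsto_rpow_comp (hs1 : Tendsto s atTop (nhds 1))
    (hs2 : ∀ᶠ β in atTop, s β ∈ Set.Ico (1/2:ℝ) 1) (y : ℝ) (hy : 0 ≤ y) :
    Tendsto (fun β => y ^ s β) atTop (nhds y) := by
  rcases eq_or_lt_of_le hy with h0 | h0
  · rw [← h0]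
    refine Tendsto.congr' ?_ tendsto_const_nhds
    filter_upwards [hs2] with β hβ
    exact (Real.zero_rpow (by have := hβ.1; positivity)).symm
  · have h := (Real.continuous_exp.tendsto _).comp (hs1.const_mul (Real.log y))
    simp only [Function.comp_def, mul_one, Real.exp_log h0] at h
    refine h.congr fun β => ?_
    rw [Real.rpow_def_of_pos h0]

lemma tendsto_J (hr : Measurable r) (hfin : ∀ᵐ x ∂ν₀, r x < ⊤)
    (hmass : ∫⁻ x, r x ∂ν₀ = 1) (hs1 : Tendsto s atTop (nhds 1))
    (hs2 : ∀ᶠ β in atTop, s β ∈ Set.Ico (1/2:ℝ) 1) :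
    Tendsto (fun β => ∫ x, (r x).toReal ^ s β ∂ν₀) atTop (nhds 1) := by
  have h := tendsto_integral_filter_of_dominated_convergence (μ := ν₀)
    (F := fun β x => (r x).toReal ^ s β) (f := fun x => (r x).toReal)
    (bound := fun x => 1 + (r x).toReal)
    (Filter.Eventually.of_forall fun β =>
      (hr.ennreal_toReal.pow_const (s β)).aestronglyMeasurable)
    (by filter_upwards [hs2] with β hβ
        filter_upwards with x
        rw [Real.norm_eq_abs, abs_of_nonneg (Real.rpow_nonneg ENNReal.toReal_nonneg _)]
        exact aux_rpow_le ENNReal.toReal_nonneg (by linarith [hβ.1]) hβ.2.le)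
    ((integrable_const 1).add (integrable_rho hr hmass))
    (Filter.Eventually.of_forall fun x => tendsto_rpow_comp hs1 hs2 _ ENNReal.toReal_nonneg)
  rwa [integral_rho hr hfin hmass] at h

lemma tendsto_I_of_integrable (hr : Measurable r)
    (hmass : ∫⁻ x, r x ∂ν₀ = 1) (hs1 : Tendsto s atTop (nhds 1))
    (hs2 : ∀ᶠ β in atTop, s β ∈ Set.Ico (1/2:ℝ) 1)
    (hA : Integrable (fun x => (r x).toReal * Real.log ((r x).toReal)) ν₀) :
    Tendsto (fun β => ∫ x, (r x).toReal ^ s β * Real.log ((r x).toReal) ∂ν₀) atTop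
      (nhds (∫ x, (r x).toReal * Real.log ((r x).toReal) ∂ν₀)) := by
  refine tendsto_integral_filter_of_dominated_convergence (μ := ν₀)
    (F := fun β x => (r x).toReal ^ s β * Real.log ((r x).toReal))
    (f := fun x => (r x).toReal * Real.log ((r x).toReal))
    (bound := fun x => 2 + |(r x).toReal * Real.log ((r x).toReal)|)
    (Filter.Eventually.of_forall fun β =>
      ((hr.ennreal_toReal.pow_const (s β)).mul
        (Real.measurable_log.comp hr.ennreal_toReal)).aestronglyMeasurable)
    (by filter_upwards [hs2] with β hβ
        filter_upwards with x
        rw [Real.norm_eq_abs]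
        exact aux_bound2 ENNReal.toReal_nonneg hβ.1 hβ.2.le)
    ((integrable_const 2).add hA.abs)
    (Filter.Eventually.of_forall fun x =>
      (tendsto_rpow_comp hs1 hs2 _ ENNReal.toReal_nonneg).mul_const _)

lemma tendsto_I_top (hr : Measurable r)
    (hmass : ∫⁻ x, r x ∂ν₀ = 1) (hs1 : Tendsto s atTop (nhds 1))
    (hs2 : ∀ᶠ β in atTop, s β ∈ Set.Ico (1/2:ℝ) 1)
    (hB : ¬ Integrable (fun x => (r x).toReal * Real.log ((r x).toReal)) ν₀) :
    Tendsto (fun β => ∫ x, (r x).toReal ^ s β * Real.log ((r x).toReal) ∂ν₀) atTop atTop := by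
  have hρm : Measurable fun x => (r x).toReal := hr.ennreal_toReal
  have hρ0 : ∀ x, 0 ≤ (r x).toReal := fun x => ENNReal.toReal_nonneg
  set G := fun x => (r x).toReal * max (Real.log ((r x).toReal)) 0 with hG
  set Nf := fun x => (r x).toReal * max (-Real.log ((r x).toReal)) 0 with hNf
  have hG0 : ∀ x, 0 ≤ G x := fun x => mul_nonneg (hρ0 x) (le_max_right _ _)
  have hGm : Measurable G := hρm.mul ((Real.measurable_log.comp hρm).max measurable_const)
  have hNm : Measurable Nf := hρm.mul ((Real.measurable_log.comp hρm).neg.max measurable_const)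
  have hNint : Integrable Nf ν₀ := by
    refine Integrable.mono' (integrable_const 1) hNm.aestronglyMeasurable ?_
    filter_upwards with x
    rw [Real.norm_eq_abs, abs_of_nonneg (mul_nonneg (hρ0 x) (le_max_right _ _))]
    exact aux_neglog1 (hρ0 x)
  have hGnotint : ¬ Integrable G ν₀ := by
    intro hGint
    apply hB
    have hsplit : (fun x => (r x).toReal * Real.log ((r x).toReal)) = fun x => G x - Nf x := by
      funext x
      rw [hG, hNf, ← mul_sub, ← aux_log_split]
    rw [hsplit]
    exact hGint.sub hNint
  have hGfin : ∫⁻ x, ENNReal.ofReal (G x) ∂ν₀ = ⊤ := by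
    by_contra hfin2
    exact hGnotint ⟨hGm.aestronglyMeasurable,
      (hasFiniteIntegral_iff_ofReal (Filter.Eventually.of_forall hG0)).2
        (lt_top_iff_ne_top.2 hfin2)⟩
  -- the positive-part integrals tend to infinity
  rw [tendsto_atTop]
  intro M
  set M' := max M 0 with hM'
  -- choose a truncation level n
  have hsup : (⨆ n : ℕ, ∫⁻ x, min (ENNReal.ofReal (G x)) (n : ℝ≥0∞) ∂ν₀) = ⊤ := by
    have hmeas : ∀ n : ℕ, Measurable fun x => min (ENNReal.ofReal (G x)) (n : ℝ≥0∞) :=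
      fun n => (ENNReal.measurable_ofReal.comp hGm).min measurable_const
    have hmono : Monotone fun (n : ℕ) (x : Ω) => min (ENNReal.ofReal (G x)) (n : ℝ≥0∞) :=
      fun a b hab x => min_le_min le_rfl (Nat.cast_le.mpr hab)
    rw [← lintegral_iSup hmeas hmono, ← hGfin]
    apply lintegral_congr
    intro x
    refine le_antisymm (iSup_le fun n => min_le_left _ _) ?_
    have hce : ENNReal.ofReal (G x) ≤ ((⌈G x⌉₊ : ℕ) : ℝ≥0∞) := by
      rw [← ENNReal.ofReal_natCast]
      exact ENNReal.ofReal_le_ofReal (Nat.le_ceil _)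
    calc ENNReal.ofReal (G x)
        = min (ENNReal.ofReal (G x)) ((⌈G x⌉₊ : ℕ) : ℝ≥0∞) := (min_eq_left hce).symm
      _ ≤ _ := le_iSup (fun n : ℕ => min (ENNReal.ofReal (G x)) (n : ℝ≥0∞)) (⌈G x⌉₊)
  have hex : ∃ n : ℕ, ENNReal.ofReal (M' + 3) < ∫⁻ x, min (ENNReal.ofReal (G x)) (n:ℝ≥0∞) ∂ν₀ := by
    rw [← lt_iSup_iff, hsup]
    exact ENNReal.ofReal_lt_top
  obtain ⟨n, hn⟩ := hex
  have hFn_fin : ∫⁻ x, min (ENNReal.ofReal (G x)) n ∂ν₀ ≠ ⊤ := by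
    refine ne_top_of_le_ne_top (by simp : (n : ℝ≥0∞) * ν₀ Set.univ ≠ ⊤) ?_
    rw [← lintegral_const]
    exact lintegral_mono fun x => min_le_right _ _
  -- real truncated integral
  have hGN_ofReal : ∀ x, ENNReal.ofReal (min (G x) n) = min (ENNReal.ofReal (G x)) n := by
    intro x
    rcases le_total (G x) (n:ℝ) with h | h
    · rw [min_eq_left h, min_eq_left]
      rw [← ENNReal.ofReal_natCast]
      exact ENNReal.ofReal_le_ofReal h
    · rw [min_eq_right h, min_eq_right, ENNReal.ofReal_natCast]
      rw [← ENNReal.ofReal_natCast]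
      exact ENNReal.ofReal_le_ofReal h
  have hGNm : Measurable fun x => min (G x) (n:ℝ) := hGm.min measurable_const
  have hGN_int : ∫ x, min (G x) (n:ℝ) ∂ν₀
      = (∫⁻ x, min (ENNReal.ofReal (G x)) n ∂ν₀).toReal := by
    rw [integral_eq_lintegral_of_nonneg_ae
      (Filter.Eventually.of_forall fun x => le_min (hG0 x) (Nat.cast_nonneg n))
      hGNm.aestronglyMeasurable]
    congr 1
    exact lintegral_congr fun x => hGN_ofReal x
  have hGN_big : M' + 3 < ∫ x, min (G x) (n:ℝ) ∂ν₀ := by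
    rw [hGN_int]
    have := (ENNReal.toReal_lt_toReal ENNReal.ofReal_ne_top hFn_fin).2 hn
    rwa [ENNReal.toReal_ofReal (by positivity)] at this
  -- DCT for the truncated integrals
  have hDCT : Tendsto (fun β => ∫ x, min ((r x).toReal ^ s β * max (Real.log ((r x).toReal)) 0) (n:ℝ) ∂ν₀)
      atTop (nhds (∫ x, min (G x) (n:ℝ) ∂ν₀)) := by
    refine tendsto_integral_filter_of_dominated_convergence (μ := ν₀)
      (bound := fun _ => (n:ℝ))
      (Filter.Eventually.of_forall fun β =>
        (((hρm.pow_const (s β)).mul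
          ((Real.measurable_log.comp hρm).max measurable_const)).min
            measurable_const).aestronglyMeasurable)
      (Filter.Eventually.of_forall fun β => Filter.Eventually.of_forall fun x => ?_)
      (integrable_const _)
      (Filter.Eventually.of_forall fun x => ?_)
    · rw [Real.norm_eq_abs, abs_of_nonneg (le_min
        (mul_nonneg (Real.rpow_nonneg (hρ0 x) _) (le_max_right _ _)) (Nat.cast_nonneg n))]
      exact min_le_right _ _
    · exact ((tendsto_rpow_comp hs1 hs2 _ (hρ0 x)).mul_const _).min tendsto_const_nhds
  have hev : ∀ᶠ β in atTop,
      M' + 2 < ∫ x, min ((r x).toReal ^ s β * max (Real.log ((r x).toReal)) 0) (n:ℝ) ∂ν₀ :=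
    hDCT.eventually (eventually_gt_nhds (by linarith))
  filter_upwards [hs2, hev] with β hβ h2
  -- integrabilities at parameter β
  have hlog_int : Integrable
      (fun x => (r x).toReal ^ s β * Real.log ((r x).toReal)) ν₀ :=
    integrable_rpow_log hr hmass hβ.1 hβ.2
  have hpos_int : Integrable
      (fun x => (r x).toReal ^ s β * max (Real.log ((r x).toReal)) 0) ν₀ := by
    refine Integrable.mono' hlog_int.abs
      ((hρm.pow_const (s β)).mul
        ((Real.measurable_log.comp hρm).max measurable_const)).aestronglyMeasurable ?_
    filter_upwards with x
    rw [Real.norm_eq_abs,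
      abs_of_nonneg (mul_nonneg (Real.rpow_nonneg (hρ0 x) _) (le_max_right _ _)),
      abs_mul, abs_of_nonneg (Real.rpow_nonneg (hρ0 x) _)]
    exact mul_le_mul_of_nonneg_left (max_le (le_abs_self _) (abs_nonneg _))
      (Real.rpow_nonneg (hρ0 x) _)
  have hneg_int : Integrable
      (fun x => (r x).toReal ^ s β * max (-Real.log ((r x).toReal)) 0) ν₀ := by
    refine Integrable.mono' hlog_int.abs
      ((hρm.pow_const (s β)).mul
        (((Real.measurable_log.comp hρm).neg).max measurable_const)).aestronglyMeasurable ?_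
    filter_upwards with x
    rw [Real.norm_eq_abs,
      abs_of_nonneg (mul_nonneg (Real.rpow_nonneg (hρ0 x) _) (le_max_right _ _)),
      abs_mul, abs_of_nonneg (Real.rpow_nonneg (hρ0 x) _)]
    exact mul_le_mul_of_nonneg_left (max_le (neg_le_abs _) (abs_nonneg _))
      (Real.rpow_nonneg (hρ0 x) _)
  have hmin_int : Integrable
      (fun x => min ((r x).toReal ^ s β * max (Real.log ((r x).toReal)) 0) (n:ℝ)) ν₀ := by
    refine Integrable.mono' (integrable_const (n:ℝ))
      (((hρm.pow_const (s β)).mul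
        ((Real.measurable_log.comp hρm).max measurable_const)).min
          measurable_const).aestronglyMeasurable ?_
    filter_upwards with x
    rw [Real.norm_eq_abs, abs_of_nonneg (le_min
      (mul_nonneg (Real.rpow_nonneg (hρ0 x) _) (le_max_right _ _)) (Nat.cast_nonneg n))]
    exact min_le_right _ _
  have hIsplit : ∫ x, (r x).toReal ^ s β * Real.log ((r x).toReal) ∂ν₀
      = (∫ x, (r x).toReal ^ s β * max (Real.log ((r x).toReal)) 0 ∂ν₀)
        - ∫ x, (r x).toReal ^ s β * max (-Real.log ((r x).toReal)) 0 ∂ν₀ := by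
    rw [← integral_sub hpos_int hneg_int]
    refine integral_congr_ae (Filter.Eventually.of_forall fun x => ?_)
    simp only [← mul_sub, ← aux_log_split]
  have hNle : ∫ x, (r x).toReal ^ s β * max (-Real.log ((r x).toReal)) 0 ∂ν₀ ≤ 2 := by
    calc ∫ x, (r x).toReal ^ s β * max (-Real.log ((r x).toReal)) 0 ∂ν₀
        ≤ ∫ _x, (2:ℝ) ∂ν₀ :=
          integral_mono hneg_int (integrable_const 2) fun x => aux_neglog (hρ0 x) hβ.1
      _ = 2 := by simp
  have hPge : ∫ x, min ((r x).toReal ^ s β * max (Real.log ((r x).toReal)) 0) (n:ℝ) ∂ν₀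
      ≤ ∫ x, (r x).toReal ^ s β * max (Real.log ((r x).toReal)) 0 ∂ν₀ :=
    integral_mono hmin_int hpos_int fun x => min_le_left _ _
  have hM'M : M ≤ M' := le_max_left _ _
  rw [hIsplit]
  linarith

end conv

lemma core_tendsto {Ω : Type*} [MeasurableSpace Ω] (ν₀ : Measure Ω) [IsProbabilityMeasure ν₀]
    (r : Ω → ℝ≥0∞) (hr : Measurable r) (hfin : ∀ᵐ x ∂ν₀, r x < ⊤)
    (hmass : ∫⁻ x, r x ∂ν₀ = 1)
    (s : ℝ → ℝ) (hs1 : Tendsto s atTop (nhds 1))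
    (hs2 : ∀ᶠ β in atTop, s β ∈ Set.Ico (1/2:ℝ) 1) :
    Tendsto (fun β => klDiv (ν₀.withDensity fun x => (∫⁻ y, r y ^ s β ∂ν₀)⁻¹ * r x ^ s β) ν₀)
      atTop (nhds (klDiv (ν₀.withDensity r) ν₀)) := by
  have hform : ∀ᶠ β in atTop,
      klDiv (ν₀.withDensity fun x => (∫⁻ y, r y ^ s β ∂ν₀)⁻¹ * r x ^ s β) ν₀
        = ((- Real.log (∫ x, (r x).toReal ^ s β ∂ν₀)
            + s β * (∫ x, (r x).toReal ^ s β ∂ν₀)⁻¹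
              * ∫ x, (r x).toReal ^ s β * Real.log ((r x).toReal) ∂ν₀ : ℝ) : EReal) := by
    filter_upwards [hs2] with β hβ
    exact klDiv_geom_eq hr hfin hmass hβ.1 hβ.2
  have hJ := tendsto_J hr hfin hmass hs1 hs2
  have h1 : Tendsto (fun β => - Real.log (∫ x, (r x).toReal ^ s β ∂ν₀)) atTop (nhds 0) := by
    have h := ((Real.continuousAt_log one_ne_zero).tendsto).comp hJ
    simp only [Function.comp_def, Real.log_one] at h
    simpa using h.neg
  have h2 : Tendsto (fun β => s β * (∫ x, (r x).toReal ^ s β ∂ν₀)⁻¹) atTop (nhds 1) := by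
    have := hs1.mul (hJ.inv₀ one_ne_zero)
    simpa using this
  by_cases hA : Integrable (fun x => (r x).toReal * Real.log ((r x).toReal)) ν₀
  · rw [klDiv_withDensity_eq r hr hfin hA]
    refine Tendsto.congr' (hform.mono fun β h => h.symm) ?_
    rw [EReal.tendsto_coe]
    have hI := tendsto_I_of_integrable hr hmass hs1 hs2 hA
    have h3 := h1.add (h2.mul hI)
    simpa [mul_assoc] using h3
  · rw [klDiv_one_top hr hfin hA, EReal.tendsto_nhds_top_iff_real]
    intro M
    have hI := tendsto_I_top hr hmass hs1 hs2 hA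
    have hF : Tendsto (fun β => - Real.log (∫ x, (r x).toReal ^ s β ∂ν₀)
        + s β * (∫ x, (r x).toReal ^ s β ∂ν₀)⁻¹
          * ∫ x, (r x).toReal ^ s β * Real.log ((r x).toReal) ∂ν₀) atTop atTop :=
      h1.add_atTop (Filter.Tendsto.pos_mul_atTop one_pos h2 hI)
    filter_upwards [hform, hF.eventually_gt_atTop M] with β he hgt
    rw [he]
    exact_mod_cast hgt

theorem stmt5 {Ω : Type*} [MeasurableSpace Ω] (π ν₀ ν₁ : Measure Ω) [SigmaFinite π]
    [IsProbabilityMeasure ν₀] [IsProbabilityMeasure ν₁]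
    (f₀ f₁ : Ω → ℝ≥0∞) (hf₀ : Measurable f₀) (hf₁ : Measurable f₁)
    (hν₀ : ν₀ = π.withDensity f₀) (hν₁ : ν₁ = π.withDensity f₁)
    (h01 : ν₁ ≪ ν₀) :
    Filter.Tendsto (fun β : ℝ => klDiv (geomMix π f₀ f₁ β) ν₀) Filter.atTop
      (nhds (klDiv ν₁ ν₀)) := by
  subst hν₀ hν₁
  set r : Ω → ℝ≥0∞ := fun x => f₁ x * (f₀ x)⁻¹ with hrdef
  have hrm : Measurable r := hf₁.mul hf₀.inv
  have hint0 : ∫⁻ x, f₀ x ∂π = 1 := by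
    have h := measure_univ (μ := π.withDensity f₀)
    rwa [withDensity_apply _ MeasurableSet.univ, setLIntegral_univ] at h
  have hint1 : ∫⁻ x, f₁ x ∂π = 1 := by
    have h := measure_univ (μ := π.withDensity f₁)
    rwa [withDensity_apply _ MeasurableSet.univ, setLIntegral_univ] at h
  have hf₀fin : ∀ᵐ x ∂π, f₀ x < ⊤ := ae_lt_top hf₀ (by rw [hint0]; exact ENNReal.one_ne_top)
  have hf₁fin : ∀ᵐ x ∂π, f₁ x < ⊤ := ae_lt_top hf₁ (by rw [hint1]; exact ENNReal.one_ne_top)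
  have hS : MeasurableSet {x | f₀ x = 0} := hf₀ (measurableSet_singleton 0)
  have hzero : (π.withDensity f₀) {x | f₀ x = 0} = 0 := by
    rw [withDensity_apply _ hS,
      setLIntegral_congr_fun hS (fun x hx => hx)]
    simp
  have h10 : ∀ᵐ x ∂π, f₀ x = 0 → f₁ x = 0 := by
    have h1 : (π.withDensity f₁) {x | f₀ x = 0} = 0 := h01 hzero
    rw [withDensity_apply _ hS, setLIntegral_eq_zero_iff hS hf₁] at h1
    exact h1
  have hν₁r : π.withDensity f₁ = (π.withDensity f₀).withDensity r := by
    rw [← withDensity_mul π hf₀ hrm]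
    apply withDensity_congr_ae
    filter_upwards [hf₀fin, h10] with x hfx h0x
    by_cases h : f₀ x = 0
    · simp [hrdef, h, h0x h]
    · show f₁ x = f₀ x * (f₁ x * (f₀ x)⁻¹)
      rw [mul_comm (f₁ x) _, ← mul_assoc, ENNReal.mul_inv_cancel h hfx.ne, one_mul]
  have hacπ : π.withDensity f₀ ≪ π := withDensity_absolutelyContinuous _ _
  have hne0 : ∀ᵐ x ∂(π.withDensity f₀), f₀ x ≠ 0 := by
    rw [ae_iff]
    simpa using hzero
  have hfin_r : ∀ᵐ x ∂(π.withDensity f₀), r x < ⊤ := by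
    filter_upwards [hacπ.ae_le hf₁fin, hne0] with x h1 h0
    exact ENNReal.mul_lt_top h1 (ENNReal.inv_lt_top.2 (pos_iff_ne_zero.2 h0))
  have hmass_r : ∫⁻ x, r x ∂(π.withDensity f₀) = 1 := by
    have h := measure_univ (μ := π.withDensity f₁)
    rw [hν₁r] at h
    rwa [withDensity_apply _ MeasurableSet.univ, setLIntegral_univ] at h
  have hs1 : Tendsto (fun β : ℝ => β / (1 + β)) atTop (nhds 1) := by
    have h : Tendsto (fun β : ℝ => (1 + β)⁻¹) atTop (nhds 0) :=
      tendsto_inv_atTop_zero.comp (tendsto_atTop_add_const_left atTop 1 tendsto_id)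
    refine Tendsto.congr' ?_ (by simpa using tendsto_const_nhds.sub h)
    filter_upwards [eventually_gt_atTop (0:ℝ)] with β hβ
    have h0 : (1:ℝ) + β ≠ 0 := by positivity
    field_simp
    ring
  have hs2 : ∀ᶠ β in atTop, (fun β : ℝ => β / (1 + β)) β ∈ Set.Ico (1/2:ℝ) 1 := by
    filter_upwards [eventually_ge_atTop (1:ℝ)] with β hβ
    have h0 : (0:ℝ) < 1 + β := by linarith
    constructor
    · rw [le_div_iff₀ h0]; linarith
    · rw [div_lt_one h0]; linarith
  have hcore := core_tendsto (π.withDensity f₀) r hrm hfin_r hmass_r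
    (fun β : ℝ => β / (1 + β)) hs1 hs2
  rw [hν₁r]
  refine Tendsto.congr' ?_ hcore
  filter_upwards [eventually_ge_atTop (1:ℝ)] with β hβ
  set b : ℝ := β / (1 + β) with hbdef
  set a : ℝ := 1 / (1 + β) with hadef
  have h0β : (0:ℝ) < 1 + β := by linarith
  have ha0 : 0 < a := by rw [hadef]; positivity
  have hb0 : 0 < b := by rw [hbdef]; positivity
  have hab : a + b = 1 := by rw [hadef, hbdef]; field_simp
  have hpt : ∀ᵐ x ∂π, f₀ x ^ a * f₁ x ^ b = f₀ x * r x ^ b := by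
    filter_upwards [hf₀fin, hf₁fin, h10] with x h0fin h1fin h0z
    by_cases h0 : f₀ x = 0
    · rw [h0, h0z h0]
      simp [hrdef, ENNReal.zero_rpow_of_pos ha0, ENNReal.zero_rpow_of_pos hb0, h0]
    · have hb_ne0 : f₀ x ^ b ≠ 0 := by
        simp [ENNReal.rpow_eq_zero_iff, h0, h0fin.ne, not_lt.2 hb0.le]
      have hb_ne_top : f₀ x ^ b ≠ ⊤ := by
        simp [ENNReal.rpow_eq_top_iff, h0, h0fin.ne, not_lt.2 hb0.le]
      have hrx : r x ^ b = f₁ x ^ b * (f₀ x ^ b)⁻¹ := by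
        show (f₁ x * (f₀ x)⁻¹) ^ b = _
        rw [ENNReal.mul_rpow_of_ne_top h1fin.ne (ENNReal.inv_ne_top.2 h0),
          ENNReal.inv_rpow]
      rw [hrx]
      calc f₀ x ^ a * f₁ x ^ b
          = f₀ x ^ a * f₁ x ^ b * (f₀ x ^ b * (f₀ x ^ b)⁻¹) := by
            rw [ENNReal.mul_inv_cancel hb_ne0 hb_ne_top, mul_one]
        _ = (f₀ x ^ a * f₀ x ^ b) * (f₁ x ^ b * (f₀ x ^ b)⁻¹) := by ring
        _ = f₀ x * (f₁ x ^ b * (f₀ x ^ b)⁻¹) := by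
            rw [← ENNReal.rpow_add a b h0 h0fin.ne, hab, ENNReal.rpow_one]
  have hC : geomConst π f₀ f₁ β = ∫⁻ y, r y ^ b ∂(π.withDensity f₀) := by
    rw [geomConst, lintegral_withDensity_eq_lintegral_mul π hf₀ (hrm.pow_const b)]
    exact lintegral_congr_ae hpt
  show klDiv ((π.withDensity f₀).withDensity
      fun x => (∫⁻ y, r y ^ b ∂(π.withDensity f₀))⁻¹ * r x ^ b) (π.withDensity f₀)
    = klDiv (geomMix π f₀ f₁ β) (π.withDensity f₀)
  congr 1
  rw [geomMix, ← withDensity_mul π hf₀ ((hrm.pow_const b).const_mul _)]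
  apply withDensity_congr_ae
  filter_upwards [hpt] with x hx
  show f₀ x * ((∫⁻ y, r y ^ b ∂(π.withDensity f₀))⁻¹ * r x ^ b)
      = (geomConst π f₀ f₁ β)⁻¹ * (f₀ x ^ a * f₁ x ^ b)
  rw [← hC, hx]
  ring
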